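/- arXiv:2002.07867 — 5 statements merged into one kernel-verified Lean document; each statement's English description precedes it below -/
import Mathlib

section
/- Let σ: ℝ → ℝ be 1-Lipschitz with |σ(x)| ≤ |x| for all x. Given two parameter sets θ_a = (W_l^a) and θ_b = (W_l^b) with spectral norm bounds λ̄_l ≥ max(‖W_l^a‖_2, ‖W_l^b‖_2), the layer outputs satisfy ‖F_l^a − F_l^b‖_F ≤ ‖X‖_F · (∏_{p=1}^{l} λ̄_p) · Σ_{p=1}^{l} λ̄_p^{-1} ‖W_p^a − W_p^b‖_2 for every l ∈ [L]. -/
open Matrix BigOperators Finset MeasureTheory ProbabilityTheory Filter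
open scoped NNReal

/-- Frobenius norm of a real matrix. -/
noncomputable def frob {m n : Type*} [Fintype m] [Fintype n] (M : Matrix m n ℝ) : ℝ :=
  Real.sqrt (∑ i, ∑ j, (M i j) ^ 2)

/-- Spectral norm (largest singular value) of a real matrix. -/
noncomputable def spec {m n : Type*} [Fintype m] [Fintype n] [DecidableEq n]
    (M : Matrix m n ℝ) : ℝ :=
  ‖LinearMap.toContinuousLinearMap (Matrix.toEuclideanLin M)‖

lemma spec_nonneg' {m n : Type*} [Fintype m] [Fintype n] [DecidableEq n]
    (M : Matrix m n ℝ) : 0 ≤ spec M := norm_nonneg _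

lemma frob_nonneg' {m n : Type*} [Fintype m] [Fintype n] (M : Matrix m n ℝ) :
    0 ≤ frob M := Real.sqrt_nonneg _

lemma spec_sub_le' {m n : Type*} [Fintype m] [Fintype n] [DecidableEq n]
    (A B : Matrix m n ℝ) : spec (A - B) ≤ spec A + spec B := by
  unfold spec
  rw [map_sub, map_sub]
  exact norm_sub_le _ _

section frobnorm
attribute [local instance] Matrix.frobeniusSeminormedAddCommGroup

lemma frob_eq_norm' {m n : Type*} [Fintype m] [Fintype n] (M : Matrix m n ℝ) :
    frob M = ‖M‖ := by
  rw [Matrix.frobenius_norm_def, frob, Real.sqrt_eq_rpow]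
  norm_num [Real.norm_eq_abs, sq_abs]

lemma frob_add_le' {m n : Type*} [Fintype m] [Fintype n] (A B : Matrix m n ℝ) :
    frob (A + B) ≤ frob A + frob B := by
  rw [frob_eq_norm', frob_eq_norm', frob_eq_norm']
  exact norm_add_le _ _

end frobnorm

lemma norm_mulVec_le' {m n : Type*} [Fintype m] [Fintype n] [DecidableEq n]
    (M : Matrix m n ℝ) (x : n → ℝ) :
    Real.sqrt (∑ i, (M *ᵥ x) i ^ 2) ≤ spec M * Real.sqrt (∑ j, (x j) ^ 2) := by
  have h := (LinearMap.toContinuousLinearMap (Matrix.toEuclideanLin M)).le_opNorm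
    ((WithLp.equiv 2 (n → ℝ)).symm x)
  have e1 : ‖((WithLp.equiv 2 (n → ℝ)).symm x : EuclideanSpace ℝ n)‖
      = Real.sqrt (∑ j, (x j) ^ 2) := by
    rw [EuclideanSpace.norm_eq]; simp [Real.norm_eq_abs, sq_abs]
  have e2 : LinearMap.toContinuousLinearMap (Matrix.toEuclideanLin M)
      ((WithLp.equiv 2 (n → ℝ)).symm x) = (WithLp.equiv 2 (m → ℝ)).symm (M *ᵥ x) := by
    simp [Matrix.toEuclideanLin_apply]
  have e3 : ‖((WithLp.equiv 2 (m → ℝ)).symm (M *ᵥ x) : EuclideanSpace ℝ m)‖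
      = Real.sqrt (∑ i, (M *ᵥ x) i ^ 2) := by
    rw [EuclideanSpace.norm_eq]; simp [Real.norm_eq_abs, sq_abs]
  rw [e2, e1, e3] at h; exact h

lemma frob_transpose' {m n : Type*} [Fintype m] [Fintype n] (M : Matrix m n ℝ) :
    frob Mᵀ = frob M := by
  unfold frob
  rw [Finset.sum_comm]
  rfl

lemma frob_mul_left' {l m n : Type*} [Fintype l] [Fintype m] [Fintype n] [DecidableEq m]
    (A : Matrix l m ℝ) (B : Matrix m n ℝ) : frob (A * B) ≤ spec A * frob B := by
  have hcol : ∀ j, ∑ i, ((A * B) i j) ^ 2 ≤ spec A ^ 2 * ∑ k, (B k j) ^ 2 := by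
    intro j
    have h := norm_mulVec_le' A (fun k => B k j)
    have hmv : ∀ i, (A *ᵥ (fun k => B k j)) i = (A * B) i j := by
      intro i; simp [Matrix.mulVec, Matrix.mul_apply, dotProduct]
    simp only [hmv] at h
    have h2 : (Real.sqrt (∑ i, ((A * B) i j) ^ 2)) ^ 2
        ≤ (spec A * Real.sqrt (∑ k, (B k j) ^ 2)) ^ 2 :=
      pow_le_pow_left₀ (Real.sqrt_nonneg _) h 2
    rw [mul_pow, Real.sq_sqrt (Finset.sum_nonneg fun i _ => sq_nonneg _),
      Real.sq_sqrt (Finset.sum_nonneg fun k _ => sq_nonneg _)] at h2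
    exact h2
  have hsum : ∑ i, ∑ j, ((A * B) i j) ^ 2 ≤ spec A ^ 2 * ∑ k, ∑ j, (B k j) ^ 2 := by
    rw [Finset.sum_comm]
    calc ∑ j, ∑ i, ((A * B) i j) ^ 2 ≤ ∑ j, spec A ^ 2 * ∑ k, (B k j) ^ 2 :=
          Finset.sum_le_sum fun j _ => hcol j
      _ = spec A ^ 2 * ∑ k, ∑ j, (B k j) ^ 2 := by
          rw [← Finset.mul_sum, Finset.sum_comm]
  unfold frob
  calc Real.sqrt (∑ i, ∑ j, ((A * B) i j) ^ 2)
      ≤ Real.sqrt (spec A ^ 2 * ∑ k, ∑ j, (B k j) ^ 2) := Real.sqrt_le_sqrt hsum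
    _ = spec A * Real.sqrt (∑ k, ∑ j, (B k j) ^ 2) := by
        rw [Real.sqrt_mul (sq_nonneg _), Real.sqrt_sq (spec_nonneg' A)]

lemma spec_transpose' {m n : Type*} [Fintype m] [Fintype n] [DecidableEq m] [DecidableEq n]
    (M : Matrix m n ℝ) : spec Mᵀ = spec M := by
  have h1 : Mᵀ = Mᴴ := by ext i j; simp [Matrix.conjTranspose_apply]
  unfold spec
  rw [h1, Matrix.toEuclideanLin_conjTranspose_eq_adjoint,
    LinearMap.adjoint_toContinuousLinearMap]
  exact ContinuousLinearMap.adjoint.norm_map _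

lemma frob_mul_spec' {l m n : Type*} [Fintype l] [Fintype m] [Fintype n]
    [DecidableEq m] [DecidableEq n]
    (M : Matrix l m ℝ) (W : Matrix m n ℝ) : frob (M * W) ≤ frob M * spec W := by
  calc frob (M * W) = frob ((M * W)ᵀ) := (frob_transpose' _).symm
    _ = frob (Wᵀ * Mᵀ) := by rw [Matrix.transpose_mul]
    _ ≤ spec Wᵀ * frob Mᵀ := frob_mul_left' _ _
    _ = frob M * spec W := by rw [spec_transpose', frob_transpose']; ring

lemma frob_map_sub_le' {m n : Type*} [Fintype m] [Fintype n] (σ : ℝ → ℝ)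
    (hσ1 : LipschitzWith 1 σ) (A B : Matrix m n ℝ) :
    frob (A.map σ - B.map σ) ≤ frob (A - B) := by
  apply Real.sqrt_le_sqrt
  refine Finset.sum_le_sum fun i _ => Finset.sum_le_sum fun j _ => ?_
  have h : |σ (A i j) - σ (B i j)| ≤ |A i j - B i j| := by
    have := hσ1.dist_le_mul (A i j) (B i j)
    simpa [Real.dist_eq] using this
  calc ((A.map σ - B.map σ) i j) ^ 2 = |σ (A i j) - σ (B i j)| ^ 2 := by
        simp [sq_abs, Matrix.sub_apply, Matrix.map_apply]
    _ ≤ |A i j - B i j| ^ 2 := pow_le_pow_left₀ (abs_nonneg _) h 2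
    _ = ((A - B) i j) ^ 2 := by simp [sq_abs]

lemma frob_map_le' {m n : Type*} [Fintype m] [Fintype n] (σ : ℝ → ℝ)
    (hσ2 : ∀ x : ℝ, |σ x| ≤ |x|) (A : Matrix m n ℝ) :
    frob (A.map σ) ≤ frob A := by
  apply Real.sqrt_le_sqrt
  refine Finset.sum_le_sum fun i _ => Finset.sum_le_sum fun j _ => ?_
  calc ((A.map σ) i j) ^ 2 = |σ (A i j)| ^ 2 := by simp [sq_abs, Matrix.map_apply]
    _ ≤ |A i j| ^ 2 := pow_le_pow_left₀ (abs_nonneg _) (hσ2 _) 2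
    _ = (A i j) ^ 2 := by simp [sq_abs]

/-- Lipschitz dependence of layer outputs on the weights. -/
theorem stmt1 {N L : ℕ} (hL : 1 ≤ L) (n : ℕ → ℕ) (σ : ℝ → ℝ)
    (hσ1 : LipschitzWith 1 σ) (hσ2 : ∀ x : ℝ, |σ x| ≤ |x|)
    (X : Matrix (Fin N) (Fin (n 0)) ℝ)
    (Wa Wb : (l : ℕ) → Matrix (Fin (n l)) (Fin (n (l + 1))) ℝ)
    (Fa Fb : (l : ℕ) → Matrix (Fin N) (Fin (n l)) ℝ)
    (lam : ℕ → ℝ)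
    (hlam : ∀ l : ℕ, max (spec (Wa l)) (spec (Wb l)) ≤ lam l)
    (hFa0 : Fa 0 = X) (hFb0 : Fb 0 = X)
    (hamid : ∀ l : ℕ, l + 1 ≤ L - 1 → Fa (l + 1) = (Fa l * Wa l).map σ)
    (hbmid : ∀ l : ℕ, l + 1 ≤ L - 1 → Fb (l + 1) = (Fb l * Wb l).map σ)
    (halast : ∀ l : ℕ, l + 1 = L → Fa (l + 1) = Fa l * Wa l)
    (hblast : ∀ l : ℕ, l + 1 = L → Fb (l + 1) = Fb l * Wb l) :
    ∀ l : ℕ, 1 ≤ l → l ≤ L →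
      frob (Fa l - Fb l) ≤
        frob X * (∏ p ∈ Finset.range l, lam p) *
          ∑ p ∈ Finset.range l, (lam p)⁻¹ * spec (Wa p - Wb p) := by
  have hlam0 : ∀ p, 0 ≤ lam p := fun p =>
    (spec_nonneg' (Wa p)).trans ((le_max_left _ _).trans (hlam p))
  have hprod : ∀ l, 0 ≤ ∏ p ∈ Finset.range l, lam p := fun l =>
    Finset.prod_nonneg fun p _ => hlam0 p
  -- bound on the norm of Fb
  have hB : ∀ l, l < L → frob (Fb l) ≤ frob X * ∏ p ∈ Finset.range l, lam p := by
    intro l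
    induction l with
    | zero => intro _; simp [hFb0]
    | succ l ih =>
      intro hlt
      have hl : l < L := Nat.lt_of_succ_lt hlt
      have hrec : Fb (l + 1) = (Fb l * Wb l).map σ := hbmid l (by omega)
      calc frob (Fb (l + 1)) = frob ((Fb l * Wb l).map σ) := by rw [hrec]
        _ ≤ frob (Fb l * Wb l) := frob_map_le' σ hσ2 _
        _ ≤ frob (Fb l) * spec (Wb l) := frob_mul_spec' _ _
        _ ≤ (frob X * ∏ p ∈ Finset.range l, lam p) * lam l :=
            mul_le_mul (ih hl) ((le_max_right _ _).trans (hlam l)) (spec_nonneg' _)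
              (mul_nonneg (frob_nonneg' X) (hprod l))
        _ = frob X * ∏ p ∈ Finset.range (l + 1), lam p := by
            rw [Finset.prod_range_succ]; ring
  -- main induction (valid also at l = 0)
  have main : ∀ l, l ≤ L →
      frob (Fa l - Fb l) ≤
        frob X * (∏ p ∈ Finset.range l, lam p) *
          ∑ p ∈ Finset.range l, (lam p)⁻¹ * spec (Wa p - Wb p) := by
    intro l
    induction l with
    | zero => intro _; simp [hFa0, hFb0, frob]
    | succ l ih =>
      intro hle
      have hlL : l < L := Nat.lt_of_succ_le hle
      have ihl := ih (le_of_lt hlL)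
      have hBl := hB l hlL
      -- one-step inequality
      have step : frob (Fa (l + 1) - Fb (l + 1)) ≤
          frob (Fa l - Fb l) * lam l + frob (Fb l) * spec (Wa l - Wb l) := by
        have hmain : frob (Fa l * Wa l - Fb l * Wb l) ≤
            frob (Fa l - Fb l) * lam l + frob (Fb l) * spec (Wa l - Wb l) := by
          have hdecomp : Fa l * Wa l - Fb l * Wb l
              = (Fa l - Fb l) * Wa l + Fb l * (Wa l - Wb l) := by
            rw [Matrix.sub_mul, Matrix.mul_sub]; abel
          rw [hdecomp]
          calc frob ((Fa l - Fb l) * Wa l + Fb l * (Wa l - Wb l))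
              ≤ frob ((Fa l - Fb l) * Wa l) + frob (Fb l * (Wa l - Wb l)) :=
                frob_add_le' _ _
            _ ≤ frob (Fa l - Fb l) * spec (Wa l) + frob (Fb l) * spec (Wa l - Wb l) :=
                add_le_add (frob_mul_spec' _ _) (frob_mul_spec' _ _)
            _ ≤ frob (Fa l - Fb l) * lam l + frob (Fb l) * spec (Wa l - Wb l) :=
                add_le_add
                  (mul_le_mul_of_nonneg_left ((le_max_left _ _).trans (hlam l))
                    (frob_nonneg' _)) le_rfl
        rcases eq_or_lt_of_le hle with heq | hlt
        · rw [halast l heq, hblast l heq]; exact hmain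
        · rw [hamid l (by omega), hbmid l (by omega)]
          exact le_trans (frob_map_sub_le' σ hσ1 _ _) hmain
      rw [Finset.prod_range_succ, Finset.sum_range_succ]
      by_cases h0 : lam l = 0
      · have hs0 : spec (Wa l - Wb l) = 0 := by
          have h1 := spec_sub_le' (Wa l) (Wb l)
          have h2 := hlam l
          have h3 := spec_nonneg' (Wa l - Wb l)
          have h4 : spec (Wa l) ≤ lam l := (le_max_left _ _).trans h2
          have h5 : spec (Wb l) ≤ lam l := (le_max_right _ _).trans h2
          nlinarith [spec_nonneg' (Wa l), spec_nonneg' (Wb l)]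
        rw [h0, hs0] at step ⊢
        simp only [mul_zero, zero_mul, add_zero, zero_add, _root_.inv_zero] at step ⊢
        simpa using step
      · calc frob (Fa (l + 1) - Fb (l + 1))
            ≤ frob (Fa l - Fb l) * lam l + frob (Fb l) * spec (Wa l - Wb l) := step
          _ ≤ (frob X * (∏ p ∈ Finset.range l, lam p) *
                ∑ p ∈ Finset.range l, (lam p)⁻¹ * spec (Wa p - Wb p)) * lam l
              + (frob X * ∏ p ∈ Finset.range l, lam p) * spec (Wa l - Wb l) :=
              add_le_add (mul_le_mul_of_nonneg_right ihl (hlam0 l))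
                (mul_le_mul_of_nonneg_right hBl (spec_nonneg' _))
          _ = frob X * ((∏ p ∈ Finset.range l, lam p) * lam l) *
              ((∑ p ∈ Finset.range l, (lam p)⁻¹ * spec (Wa p - Wb p))
                + (lam l)⁻¹ * spec (Wa l - Wb l)) := by
              field_simp
  intro l _ h2
  exact main l h2
end

section
/- Let the activation σ be defined by σ(x) = −(1−γ)²/(2πβ) + (β/(1−γ)) ∫_{−∞}^{∞} max(γu, u) e^{−πβ²(x−u)²/(1−γ)²} du for fixed γ ∈ (0,1) and β > 0. Then σ'(x) = γ + (1−γ)Ψ(β√(2π)x/(1−γ)), where Ψ is the CDF of the standard normal distribution; in particular σ'(x) ∈ [γ, 1] for all x ∈ ℝ. -/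
open MeasureTheory Filter
open scoped Real

/-- The Gaussian-smoothed leaky ReLU activation of the paper. -/
noncomputable def slrelu (γ β : ℝ) (x : ℝ) : ℝ :=
  -(1 - γ) ^ 2 / (2 * Real.pi * β) +
    (β / (1 - γ)) *
      ∫ u : ℝ, max (γ * u) u * Real.exp (-(Real.pi * β ^ 2 * (x - u) ^ 2) / (1 - γ) ^ 2)

/-- The CDF of the standard normal distribution. -/
noncomputable def stdNormalCDF (z : ℝ) : ℝ :=
  ∫ t in Set.Iic z, Real.exp (-t ^ 2 / 2) / Real.sqrt (2 * Real.pi)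

lemma aux_comp_mul_left_Iic (g : ℝ → ℝ) (a : ℝ) {b : ℝ} (hb : 0 < b) :
    (∫ x in Set.Iic a, g (b * x)) = b⁻¹ * ∫ x in Set.Iic (b * a), g x := by
  have h1 := integral_comp_neg_Iic a (fun y => g (-(b * y)))
  simp only [mul_neg, neg_neg] at h1
  have h2 : (∫ x in Set.Ioi (-a), g (-(b * x))) = b⁻¹ • ∫ x in Set.Ioi (b * -a), g (-x) :=
    integral_comp_mul_left_Ioi (fun y => g (-y)) (-a) hb
  have h3 : (∫ x in Set.Ioi (b * -a), g (-x)) = ∫ x in Set.Iic (-(b * -a)), g x :=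
    integral_comp_neg_Ioi _ _
  simp only [mul_neg, neg_neg] at h2 h3
  rw [h1, h2, h3, smul_eq_mul]

lemma aux_max_decomp {γ : ℝ} (hγ : γ ≤ 1) (v : ℝ) :
    max (γ * v) v = γ * v + (1 - γ) * max v 0 := by
  rcases le_total v 0 with h | h
  · rw [max_eq_left, max_eq_right h, mul_zero, add_zero]
    nlinarith
  · rw [max_eq_right, max_eq_left h]
    · ring
    · nlinarith

lemma aux_Ioi_mul_exp {a : ℝ} (ha : 0 < a) (c : ℝ) :
    ∫ s in Set.Ioi c, s * Real.exp (-a * s ^ 2) = Real.exp (-a * c ^ 2) / (2 * a) := by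
  have key := integral_Ioi_of_hasDerivAt_of_tendsto' (a := c) (m := 0)
    (f := fun s => -Real.exp (-a * s ^ 2) / (2 * a))
    (f' := fun s => s * Real.exp (-a * s ^ 2)) ?_ ?_ ?_
  · rw [key]; ring
  · intro y _
    have h1 : HasDerivAt (fun s : ℝ => -a * s ^ 2) (-a * (2 * y)) y := by
      simpa using ((hasDerivAt_pow 2 y).const_mul (-a))
    have h2 := (h1.exp.neg).div_const (2 * a)
    exact h2.congr_deriv (by rw [div_eq_iff (by positivity)]; ring)
  · exact (integrable_mul_exp_neg_mul_sq ha).integrableOn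
  · have : Tendsto (fun s : ℝ => -a * s ^ 2) atTop atBot := by
      apply Tendsto.const_mul_atTop_of_neg (by linarith : -a < 0)
      exact tendsto_pow_atTop (by norm_num)
    have h := (Real.tendsto_exp_atBot.comp this).neg
    have h2 := h.div_const (2 * a)
    simpa [Function.comp, neg_div] using h2

lemma aux_int_mul_exp_zero {a : ℝ} (ha : 0 < a) :
    ∫ s : ℝ, s * Real.exp (-a * s ^ 2) = 0 := by
  have hint : Integrable (fun s : ℝ => s * Real.exp (-a * s ^ 2)) :=
    integrable_mul_exp_neg_mul_sq ha
  have h0 : (∫ s in Set.Iic (0:ℝ), s * Real.exp (-a * s ^ 2))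
      = -∫ s in Set.Ioi (0:ℝ), s * Real.exp (-a * s ^ 2) := by
    have := integral_comp_neg_Ioi (0:ℝ) (fun s => s * Real.exp (-a * s ^ 2))
    simp only [neg_zero] at this
    rw [← this]
    simp only [neg_sq, neg_mul]
    rw [integral_neg]
  have hsum := intervalIntegral.integral_Iic_add_Ioi (b := (0:ℝ))
    hint.integrableOn hint.integrableOn
  rw [← hsum, h0]
  ring

lemma aux_G_deriv {a : ℝ} (ha : 0 < a) (x : ℝ) :
    HasDerivAt (fun y => ∫ t in Set.Iic y, Real.exp (-a * t ^ 2))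
      (Real.exp (-a * x ^ 2)) x := by
  have hint : Integrable (fun t : ℝ => Real.exp (-a * t ^ 2)) := integrable_exp_neg_mul_sq ha
  have hcont : Continuous (fun t : ℝ => Real.exp (-a * t ^ 2)) := by continuity
  have hd := (hcont.integral_hasStrictDerivAt 0 x).hasDerivAt
  have heq : (fun y => ∫ t in Set.Iic y, Real.exp (-a * t ^ 2))
      = fun y => (∫ t in Set.Iic (0:ℝ), Real.exp (-a * t ^ 2))
          + ∫ t in (0:ℝ)..y, Real.exp (-a * t ^ 2) := by
    funext y
    rw [← intervalIntegral.integral_Iic_sub_Iic hint.integrableOn hint.integrableOn]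
    ring
  rw [heq]
  have h2 := (hasDerivAt_const x (∫ t in Set.Iic (0:ℝ), Real.exp (-a * t ^ 2))).add hd
  rwa [zero_add] at h2

lemma aux_integral_formula {γ a : ℝ} (hγ1 : γ ≤ 1) (ha : 0 < a) (x : ℝ) :
    (∫ u : ℝ, max (γ * u) u * Real.exp (-a * (x - u) ^ 2))
      = γ * x * Real.sqrt (π / a)
        + (1 - γ) * (Real.exp (-a * x ^ 2) / (2 * a)
            + x * ∫ t in Set.Iic x, Real.exp (-a * t ^ 2)) := by
  have hIe : Integrable (fun s : ℝ => Real.exp (-a * s ^ 2)) := integrable_exp_neg_mul_sq ha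
  have hIse : Integrable (fun s : ℝ => s * Real.exp (-a * s ^ 2)) :=
    integrable_mul_exp_neg_mul_sq ha
  have hIsx : Integrable (fun s : ℝ => (s + x) * Real.exp (-a * s ^ 2)) := by
    have h := hIse.add (hIe.const_mul x)
    refine h.congr (Eventually.of_forall fun s => ?_)
    simp only [Pi.add_apply]
    ring
  have hind : (fun s : ℝ => max (s + x) 0 * Real.exp (-a * s ^ 2))
      = Set.indicator (Set.Ici (-x)) (fun s => (s + x) * Real.exp (-a * s ^ 2)) := by
    funext s
    by_cases h : s ∈ Set.Ici (-x)
    · rw [Set.indicator_of_mem h, max_eq_left]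
      simp only [Set.mem_Ici] at h; linarith
    · rw [Set.indicator_of_notMem h, max_eq_right]
      · ring
      · simp only [Set.mem_Ici, not_le] at h; linarith
  have hImax : Integrable (fun s : ℝ => max (s + x) 0 * Real.exp (-a * s ^ 2)) := by
    rw [hind]
    exact hIsx.integrableOn.integrable_indicator measurableSet_Ici
  have h1 : (∫ u : ℝ, max (γ * u) u * Real.exp (-a * (x - u) ^ 2))
      = ∫ s : ℝ, max (γ * (s + x)) (s + x) * Real.exp (-a * s ^ 2) := by
    rw [← integral_add_right_eq_self
      (fun u : ℝ => max (γ * u) u * Real.exp (-a * (x - u) ^ 2)) x]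
    congr 1
    funext s
    rw [show x - (s + x) = -s by ring, neg_sq]
  rw [h1]
  have h2 : (∫ s : ℝ, max (γ * (s + x)) (s + x) * Real.exp (-a * s ^ 2))
      = (∫ s : ℝ, γ * ((s + x) * Real.exp (-a * s ^ 2)))
        + ∫ s : ℝ, (1 - γ) * (max (s + x) 0 * Real.exp (-a * s ^ 2)) := by
    rw [← integral_add (hIsx.const_mul γ) (hImax.const_mul (1 - γ))]
    congr 1
    funext s
    rw [aux_max_decomp hγ1]
    ring
  rw [h2]
  have h3 : (∫ s : ℝ, γ * ((s + x) * Real.exp (-a * s ^ 2)))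
      = γ * (x * Real.sqrt (π / a)) := by
    rw [integral_const_mul]
    congr 1
    have : (∫ s : ℝ, (s + x) * Real.exp (-a * s ^ 2))
        = (∫ s : ℝ, s * Real.exp (-a * s ^ 2)) + ∫ s : ℝ, x * Real.exp (-a * s ^ 2) := by
      rw [← integral_add hIse (hIe.const_mul x)]
      congr 1; funext s; ring
    rw [this, aux_int_mul_exp_zero ha, integral_const_mul, integral_gaussian, zero_add]
  have h4 : (∫ s : ℝ, (1 - γ) * (max (s + x) 0 * Real.exp (-a * s ^ 2)))
      = (1 - γ) * (Real.exp (-a * x ^ 2) / (2 * a)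
          + x * ∫ t in Set.Iic x, Real.exp (-a * t ^ 2)) := by
    rw [integral_const_mul]
    congr 1
    rw [hind, integral_indicator measurableSet_Ici, integral_Ici_eq_integral_Ioi]
    have hsplit : (∫ s in Set.Ioi (-x), (s + x) * Real.exp (-a * s ^ 2))
        = (∫ s in Set.Ioi (-x), s * Real.exp (-a * s ^ 2))
          + ∫ s in Set.Ioi (-x), x * Real.exp (-a * s ^ 2) := by
      rw [← integral_add hIse.integrableOn (hIe.const_mul x).integrableOn]
      congr 1; funext s; ring
    rw [hsplit, aux_Ioi_mul_exp ha, neg_sq, integral_const_mul]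
    congr 2
    have := integral_comp_neg_Ioi (-x) (fun t : ℝ => Real.exp (-a * t ^ 2))
    simp only [neg_sq, neg_neg] at this
    rw [this]
  rw [h3, h4]
  ring

/-- `σ'(x) = γ + (1−γ)Ψ(β√(2π)x/(1−γ))`, and `σ'(x) ∈ [γ, 1]`. -/
theorem stmt6 (γ β : ℝ) (hγ : γ ∈ Set.Ioo (0 : ℝ) 1) (hβ : 0 < β) (x : ℝ) :
    HasDerivAt (slrelu γ β)
      (γ + (1 - γ) * stdNormalCDF (β * Real.sqrt (2 * Real.pi) * x / (1 - γ))) x ∧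
    γ ≤ γ + (1 - γ) * stdNormalCDF (β * Real.sqrt (2 * Real.pi) * x / (1 - γ)) ∧
    γ + (1 - γ) * stdNormalCDF (β * Real.sqrt (2 * Real.pi) * x / (1 - γ)) ≤ 1 := by
  obtain ⟨hγ0, hγ1⟩ := hγ
  have hc : (0:ℝ) < 1 - γ := by linarith
  have hπ : (0:ℝ) < π := Real.pi_pos
  set a : ℝ := π * β ^ 2 / (1 - γ) ^ 2 with hadef
  have ha : 0 < a := by rw [hadef]; positivity
  -- the derivative in terms of the Gaussian integral
  have hderiv : HasDerivAt (slrelu γ β)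
      (γ + β * ∫ t in Set.Iic x, Real.exp (-a * t ^ 2)) x := by
    set G : ℝ → ℝ := fun y => ∫ t in Set.Iic y, Real.exp (-a * t ^ 2) with hGdef
    set k : ℝ := (1 - γ) ^ 2 / (2 * π * β) with hkdef
    have hsqrt : Real.sqrt (π / a) = (1 - γ) / β := by
      rw [show π / a = ((1 - γ) / β) ^ 2 by rw [hadef]; field_simp]
      exact Real.sqrt_sq (by positivity)
    have hφ : slrelu γ β
        = fun y => k * (Real.exp (-a * y ^ 2) - 1) + γ * y + β * y * G y := by
      funext y
      rw [slrelu]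
      have hrw : (fun u : ℝ => max (γ * u) u *
            Real.exp (-(π * β ^ 2 * (y - u) ^ 2) / (1 - γ) ^ 2))
          = fun u => max (γ * u) u * Real.exp (-a * (y - u) ^ 2) := by
        funext u
        rw [show -(π * β ^ 2 * (y - u) ^ 2) / (1 - γ) ^ 2 = -a * (y - u) ^ 2 from by
          rw [hadef]; field_simp]
      rw [hrw, aux_integral_formula hγ1.le ha y, hsqrt, hkdef, hGdef]
      have h2a : 2 * a = 2 * π * β ^ 2 / (1 - γ) ^ 2 := by rw [hadef]; ring
      field_simp [h2a]
      have hA : a * (1 - γ) ^ 2 = π * β ^ 2 := by rw [hadef]; field_simp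
      linear_combination (-Real.exp (-(y ^ 2 * a))) * hA
    rw [hφ]
    have hexp : HasDerivAt (fun y : ℝ => Real.exp (-a * y ^ 2))
        (-a * (2 * x) * Real.exp (-a * x ^ 2)) x := by
      have h1 : HasDerivAt (fun y : ℝ => -a * y ^ 2) (-a * (2 * x)) x := by
        simpa using ((hasDerivAt_pow 2 x).const_mul (-a))
      simpa [mul_comm] using h1.exp
    have hd1 : HasDerivAt (fun y : ℝ => k * (Real.exp (-a * y ^ 2) - 1))
        (k * (-a * (2 * x) * Real.exp (-a * x ^ 2))) x := (hexp.sub_const 1).const_mul k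
    have hd2 : HasDerivAt (fun y : ℝ => γ * y) γ x := by
      simpa using (hasDerivAt_id x).const_mul γ
    have hd3 : HasDerivAt (fun y : ℝ => β * y * G y)
        (β * G x + β * x * Real.exp (-a * x ^ 2)) x := by
      have hβy : HasDerivAt (fun y : ℝ => β * y) β x := by
        simpa using (hasDerivAt_id x).const_mul β
      exact hβy.mul (aux_G_deriv ha x)
    have htotal := (hd1.add hd2).add hd3
    refine htotal.congr_deriv (Eq.symm ?_)
    have hka : k * (2 * a) = β := by
      rw [hkdef, hadef]; field_simp
    show γ + β * G x = k * (-a * (2 * x) * Real.exp (-a * x ^ 2)) + γ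
        + (β * G x + β * x * Real.exp (-a * x ^ 2))
    linear_combination (x * Real.exp (-a * x ^ 2)) * hka
  -- relating the Gaussian integral with the normal CDF
  have hE : (1 - γ) * stdNormalCDF (β * Real.sqrt (2 * π) * x / (1 - γ))
      = β * ∫ t in Set.Iic x, Real.exp (-a * t ^ 2) := by
    have hs : (0:ℝ) < Real.sqrt (2 * π) := Real.sqrt_pos.mpr (by positivity)
    set b : ℝ := β * Real.sqrt (2 * π) / (1 - γ) with hbdef
    have hb : 0 < b := by positivity
    have hzb : β * Real.sqrt (2 * π) * x / (1 - γ) = b * x := by rw [hbdef]; ring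
    have hb2 : b ^ 2 / 2 = a := by
      rw [hbdef, hadef, div_pow, mul_pow, Real.sq_sqrt (by positivity : (0:ℝ) ≤ 2 * π)]
      ring
    have hcomp := aux_comp_mul_left_Iic
      (fun t => Real.exp (-t ^ 2 / 2) / Real.sqrt (2 * π)) x hb
    have hptw : (fun s : ℝ => Real.exp (-(b * s) ^ 2 / 2) / Real.sqrt (2 * π))
        = fun s => Real.exp (-a * s ^ 2) / Real.sqrt (2 * π) := by
      funext s; congr 2; rw [← hb2]; ring
    rw [hzb]
    beta_reduce at hcomp
    rw [hptw, integral_div] at hcomp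
    have h5 : stdNormalCDF (b * x)
        = b * ((∫ t in Set.Iic x, Real.exp (-a * t ^ 2)) / Real.sqrt (2 * π)) := by
      rw [stdNormalCDF] at *
      rw [hcomp]
      field_simp
    rw [h5, hbdef]
    field_simp
  -- the bounds on the CDF
  set z := β * Real.sqrt (2 * π) * x / (1 - γ) with hzdef
  have hΨ0 : 0 ≤ stdNormalCDF z :=
    setIntegral_nonneg measurableSet_Iic (fun t _ => by positivity)
  have hΨ1 : stdNormalCDF z ≤ 1 := by
    have hfun : (fun t : ℝ => Real.exp (-t ^ 2 / 2) / Real.sqrt (2 * π))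
        = fun t => Real.exp (-(1/2) * t ^ 2) / Real.sqrt (2 * π) := by
      funext t
      rw [show -t ^ 2 / 2 = -(1/2) * t ^ 2 from by ring]
    have hint : Integrable (fun t : ℝ => Real.exp (-t ^ 2 / 2) / Real.sqrt (2 * π)) := by
      rw [hfun]
      exact (integrable_exp_neg_mul_sq (by norm_num : (0:ℝ) < 1/2)).div_const _
    have hle := setIntegral_le_integral (s := Set.Iic z) hint
      (Eventually.of_forall fun t => by positivity)
    have htotal : (∫ t : ℝ, Real.exp (-t ^ 2 / 2) / Real.sqrt (2 * π)) = 1 := by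
      rw [hfun, integral_div, integral_gaussian,
        show π / (1/2 : ℝ) = 2 * π by ring, div_self]
      exact (Real.sqrt_pos.mpr (by positivity)).ne'
    calc stdNormalCDF z ≤ _ := hle
    _ = 1 := htotal
  refine ⟨?_, ?_, ?_⟩
  · rw [hE]
    exact hderiv
  · nlinarith
  · nlinarith
end

section
/- Let σ be the smoothed leaky ReLU σ(x) = −(1−γ)²/(2πβ) + (β/(1−γ)) ∫ max(γu,u) e^{−πβ²(x−u)²/(1−γ)²} du with γ ∈ (0,1), β > 0. Then σ(0) = 0 and |σ(x)| ≤ |x| for every x ∈ ℝ. -/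
open MeasureTheory Filter
open scoped Real

/-- `σ(0) = 0` and `|σ(x)| ≤ |x|` for the smoothed leaky ReLU. -/
theorem stmt7 (γ β : ℝ) (hγ : γ ∈ Set.Ioo (0 : ℝ) 1) (hβ : 0 < β) :
    slrelu γ β 0 = 0 ∧ ∀ x : ℝ, |slrelu γ β x| ≤ |x| := by
  obtain ⟨hγ0, hγ1⟩ := hγ
  have h1γ : (0 : ℝ) < 1 - γ := by linarith
  set b : ℝ := Real.pi * β ^ 2 / (1 - γ) ^ 2 with hbdef
  have hb : 0 < b := by positivity
  set m : ℝ → ℝ := fun u => max (γ * u) u with hmdef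
  set G : ℝ → ℝ := fun t => Real.exp (-b * t ^ 2) with hGdef
  have hGpos : ∀ t, 0 < G t := fun t => Real.exp_pos _
  -- 1-Lipschitz property of m
  have hmabs : ∀ a c : ℝ, |m a - m c| ≤ |a - c| := by
    intro a c
    have h1 : |m a - m c| ≤ max |γ * a - γ * c| |a - c| := abs_max_sub_max_le_max _ _ _ _
    have h2 : |γ * a - γ * c| = γ * |a - c| := by
      rw [← mul_sub, abs_mul, abs_of_pos hγ0]
    refine h1.trans (max_le ?_ le_rfl)
    rw [h2]
    nlinarith [abs_nonneg (a - c)]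
  have hm0 : m 0 = 0 := by simp [hmdef]
  have hmle : ∀ u : ℝ, |m u| ≤ |u| := by
    intro u
    have := hmabs u 0
    simpa [hm0] using this
  -- continuity
  have hmcont : Continuous m := (continuous_const.mul continuous_id).max continuous_id
  have hGcont : Continuous G :=
    Real.continuous_exp.comp (continuous_const.mul (continuous_pow 2))
  -- integrability of the shifted integrand
  have hint : ∀ x : ℝ, Integrable (fun v => m (x - v) * G v) := by
    intro x
    refine Integrable.mono'
      (g := fun v => |x| * G v + |v * Real.exp (-b * v ^ 2)|)
      ((((integrable_exp_neg_mul_sq hb).const_mul |x|)).add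
        (integrable_mul_exp_neg_mul_sq hb).abs)
      (((hmcont.comp (continuous_const.sub continuous_id)).mul hGcont).aestronglyMeasurable)
      ?_
    filter_upwards with v
    have h1 : |m (x - v)| ≤ |x| + |v| := by
      refine (hmle _).trans ?_
      exact (abs_sub _ _)
    have h2 : ‖m (x - v) * G v‖ = |m (x - v)| * G v := by
      rw [norm_mul, Real.norm_eq_abs, Real.norm_eq_abs, abs_of_pos (hGpos v)]
    rw [h2]
    have h3 : |v * Real.exp (-b * v ^ 2)| = |v| * G v := by
      rw [abs_mul, abs_of_pos (hGpos v)]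
    rw [h3]
    nlinarith [hGpos v, abs_nonneg v, abs_nonneg x]
  have hint' : ∀ x : ℝ, Integrable (fun u => m u * G (x - u)) := by
    intro x
    have h := (hint x).comp_sub_left x
    simpa [sub_sub_cancel] using h
  -- change of variables
  have hIeq : ∀ x : ℝ, (∫ u, m u * G (x - u)) = ∫ v, m (x - v) * G v := by
    intro x
    have h : (fun v => m (x - v) * G v) =
        fun v => (fun u => m u * G (x - u)) (x - v) := by
      funext v
      simp [sub_sub_cancel]
    rw [h]
    exact (integral_sub_left_eq_self (fun u => m u * G (x - u)) volume x).symm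
  -- the slrelu in terms of our notation
  have hsl : ∀ x : ℝ, slrelu γ β x =
      -(1 - γ) ^ 2 / (2 * Real.pi * β) + (β / (1 - γ)) * ∫ v, m (x - v) * G v := by
    intro x
    unfold slrelu
    rw [← hIeq x]
    have harg : ∀ u : ℝ, -(Real.pi * β ^ 2 * (x - u) ^ 2) / (1 - γ) ^ 2 = -b * (x - u) ^ 2 := by
      intro u; rw [hbdef]; field_simp
    simp only [harg]
    rfl
  -- the odd integral is zero
  have hodd : (∫ u : ℝ, u * Real.exp (-b * u ^ 2)) = 0 := by
    have h := integral_neg_eq_self (fun u : ℝ => u * Real.exp (-b * u ^ 2)) volume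
    simp only [neg_sq] at h
    have h2 : (∫ u : ℝ, -u * Real.exp (-b * u ^ 2)) =
        -∫ u : ℝ, u * Real.exp (-b * u ^ 2) := by
      rw [← integral_neg]
      congr 1
      funext u
      ring
    rw [h2] at h
    linarith
  -- the half-line integral
  have hIoi : (∫ u in Set.Ioi (0 : ℝ), u * Real.exp (-b * u ^ 2)) = (2 * b)⁻¹ := by
    have A : ∀ u : ℝ, HasDerivAt (fun y : ℝ => -(2 * b)⁻¹ * Real.exp (-b * y ^ 2))
        (u * Real.exp (-b * u ^ 2)) u := by
      intro u
      have h1 : HasDerivAt (fun y : ℝ => -b * y ^ 2) (-b * (2 * u ^ 1)) u :=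
        (hasDerivAt_pow 2 u).const_mul (-b)
      have h2 := (h1.exp).const_mul (-(2 * b)⁻¹)
      refine h2.congr_deriv ?_
      have hk : (2 * b)⁻¹ * (2 * b) = 1 := inv_mul_cancel₀ (by positivity)
      linear_combination (u * Real.exp (-b * u ^ 2)) * hk
    have B : Tendsto (fun y : ℝ => -(2 * b)⁻¹ * Real.exp (-b * y ^ 2)) atTop (nhds 0) := by
      rw [show (0 : ℝ) = -(2 * b)⁻¹ * 0 by ring]
      refine Tendsto.const_mul _ ?_
      refine Real.tendsto_exp_atBot.comp ?_
      exact (tendsto_pow_atTop two_ne_zero).const_mul_atTop_of_neg (neg_lt_zero.2 hb)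
    have h := integral_Ioi_of_hasDerivAt_of_tendsto' (a := 0) (fun x _ => A x)
      ((integrable_mul_exp_neg_mul_sq hb).integrableOn (s := Set.Ioi 0)) B
    rw [h]
    norm_num
  -- value of I at 0
  have hI0 : (∫ v, m (0 - v) * G v) = (1 - γ) * (2 * b)⁻¹ := by
    rw [← hIeq 0]
    have hsplit : ∀ u : ℝ, m u * G (0 - u) =
        γ * (u * Real.exp (-b * u ^ 2)) +
          (1 - γ) * ((Set.Ioi (0 : ℝ)).indicator (fun w => w * Real.exp (-b * w ^ 2)) u) := by
      intro u
      have hGu : G (0 - u) = Real.exp (-b * u ^ 2) := by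
        rw [hGdef]
        ring_nf
      rw [hGu]
      rcases le_or_gt u 0 with hu | hu
      · have h1 : m u = γ * u := max_eq_left (by nlinarith)
        have h2 : u ∉ Set.Ioi (0 : ℝ) := by simpa using hu
        rw [h1, Set.indicator_of_notMem h2]
        ring
      · have h1 : m u = u := max_eq_right (by nlinarith)
        have h2 : u ∈ Set.Ioi (0 : ℝ) := hu
        rw [h1, Set.indicator_of_mem h2]
        ring
    rw [show (fun u => m u * G (0 - u)) =
        fun u => γ * (u * Real.exp (-b * u ^ 2)) +
          (1 - γ) * ((Set.Ioi (0 : ℝ)).indicator (fun w => w * Real.exp (-b * w ^ 2)) u)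
      from funext hsplit]
    rw [integral_add (((integrable_mul_exp_neg_mul_sq hb)).const_mul γ)
      (((integrable_mul_exp_neg_mul_sq hb).indicator measurableSet_Ioi).const_mul (1 - γ)),
      integral_const_mul, integral_const_mul, hodd,
      integral_indicator measurableSet_Ioi, hIoi]
    ring
  -- total mass of the Gaussian
  have hG : (∫ v, G v) = (1 - γ) / β := by
    have h1 : (∫ v, G v) = Real.sqrt (Real.pi / b) := integral_gaussian b
    rw [h1, show Real.pi / b = ((1 - γ) / β) ^ 2 by
      rw [hbdef]; field_simp]
    exact Real.sqrt_sq (by positivity)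
  -- part 1 : slrelu γ β 0 = 0
  have hzero : slrelu γ β 0 = 0 := by
    rw [hsl 0, hI0, hbdef]
    have hπ : (0 : ℝ) < Real.pi := Real.pi_pos
    field_simp
    ring
  refine ⟨hzero, fun x => ?_⟩
  -- part 2 : Lipschitz bound
  have key : |(∫ v, m (x - v) * G v) - ∫ v, m (0 - v) * G v| ≤ |x| * ((1 - γ) / β) := by
    rw [← integral_sub (hint x) (hint 0)]
    have h1 : |∫ v, (m (x - v) * G v - m (0 - v) * G v)| ≤
        ∫ v, |m (x - v) * G v - m (0 - v) * G v| := by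
      simpa [Real.norm_eq_abs] using
        norm_integral_le_integral_norm (fun v => m (x - v) * G v - m (0 - v) * G v)
    refine h1.trans ?_
    have h2 : (∫ v, |m (x - v) * G v - m (0 - v) * G v|) ≤ ∫ v, |x| * G v := by
      refine integral_mono ((hint x).sub (hint 0)).abs
        ((integrable_exp_neg_mul_sq hb).const_mul |x|) (fun v => ?_)
      have h3 : m (x - v) * G v - m (0 - v) * G v = (m (x - v) - m (0 - v)) * G v := by ring
      rw [h3, abs_mul, abs_of_pos (hGpos v)]
      have h4 := hmabs (x - v) (0 - v)
      have h5 : x - v - (0 - v) = x := by ring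
      rw [h5] at h4
      exact mul_le_mul_of_nonneg_right h4 (hGpos v).le
    refine h2.trans_eq ?_
    rw [integral_const_mul, hG]
  have hdiff : slrelu γ β x = (β / (1 - γ)) *
      ((∫ v, m (x - v) * G v) - ∫ v, m (0 - v) * G v) := by
    have h0 := hzero
    rw [hsl 0] at h0
    rw [hsl x]
    have : -(1 - γ) ^ 2 / (2 * Real.pi * β) = -((β / (1 - γ)) * ∫ v, m (0 - v) * G v) := by
      linarith
    rw [this]
    ring
  rw [hdiff, abs_mul, abs_of_pos (by positivity : (0 : ℝ) < β / (1 - γ))]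
  calc β / (1 - γ) * |(∫ v, m (x - v) * G v) - ∫ v, m (0 - v) * G v|
      ≤ β / (1 - γ) * (|x| * ((1 - γ) / β)) := by
        exact mul_le_mul_of_nonneg_left key (by positivity)
    _ = |x| := by field_simp
end

section
/- Let σ be the smoothed leaky ReLU with parameters γ ∈ (0,1), β > 0 as in (smoothed activation). Then sup_{x ∈ ℝ} |σ(x) − max(γx, x)| ≤ (1−γ)²/(2πβ) + (1−γ)/(πβ); in particular, σ converges uniformly to the leaky ReLU as β → ∞. -/
open MeasureTheory Filter
open scoped Real
open Set Real

private lemma abs_gauss_integral {b : ℝ} (hb : 0 < b) :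
    ∫ t : ℝ, |t| * Real.exp (-b * t ^ 2) = 1 / b := by
  have h2 : ∫ t in Ioi (0:ℝ), t * Real.exp (-b * t ^ 2) = 1 / (2*b) := by
    have key := integral_Ioi_of_hasDerivAt_of_nonneg
      (g := fun t => -Real.exp (-b * t^2) / (2*b))
      (g' := fun t => t * Real.exp (-b * t ^ 2)) (a := 0) (l := 0)
      (Continuous.continuousWithinAt (by continuity)) ?_ ?_ ?_
    · rw [key]; field_simp; simp
    · intro t _
      have h1 : HasDerivAt (fun t : ℝ => -b * t^2) (-b * (2*t)) t := by
        simpa using ((hasDerivAt_pow 2 t).const_mul (-b))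
      have := (h1.exp.neg.div_const (2*b))
      convert this using 1
      · rfl
      · rfl
      · rfl
      · rw [eq_div_iff (by positivity)]; ring
    · intro t ht; have : (0:ℝ) < t := ht; positivity
    · have h3 : Tendsto (fun t : ℝ => -b * t^2) atTop atBot :=
        (tendsto_pow_atTop (two_ne_zero)).const_mul_atTop_of_neg (by linarith)
      have h4 := tendsto_exp_atBot.comp h3
      have := (h4.neg.div_const (2*b))
      simpa using this
  have hc := integral_comp_abs (f := fun t : ℝ => t * Real.exp (-b * t ^ 2))
  simp only [sq_abs] at hc
  rw [hc, h2]
  ring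


private lemma slrelu_bound {γ : ℝ} (hγ : γ ∈ Set.Ioo (0 : ℝ) 1) {β : ℝ} (hβ : 0 < β) (x : ℝ) :
    |slrelu γ β x - max (γ * x) x| ≤
      (1 - γ) ^ 2 / (2 * Real.pi * β) + (1 - γ) / (Real.pi * β) := by
  obtain ⟨hγ0, hγ1⟩ := hγ
  have h1γ : (0:ℝ) < 1 - γ := by linarith
  set b : ℝ := Real.pi * β ^ 2 / (1 - γ) ^ 2 with hbdef
  have hb : 0 < b := by positivity
  set f : ℝ → ℝ := fun u => max (γ * u) u with hf
  set K : ℝ → ℝ := fun u => Real.exp (-b * (u - x) ^ 2) with hK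
  -- rewrite the integrand
  have hexp : ∀ u : ℝ, Real.exp (-(Real.pi * β ^ 2 * (x - u) ^ 2) / (1 - γ) ^ 2) = K u := by
    intro u
    simp only [hK]
    congr 1
    have : (x - u)^2 = (u - x)^2 := by ring
    rw [this, hbdef]
    field_simp
  -- total mass of kernel
  have hmass : ∫ u : ℝ, K u = (1 - γ) / β := by
    have := MeasureTheory.integral_sub_right_eq_self (μ := volume)
      (fun t : ℝ => Real.exp (-b * t ^ 2)) x
    simp only [hK]
    rw [this, integral_gaussian]
    rw [show Real.pi / b = ((1 - γ)/β)^2 by rw [hbdef]; field_simp]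
    exact Real.sqrt_sq (by positivity)
  -- first moment
  have hmom : ∫ u : ℝ, |u - x| * K u = 1 / b := by
    have := MeasureTheory.integral_sub_right_eq_self (μ := volume)
      (fun t : ℝ => |t| * Real.exp (-b * t ^ 2)) x
    simp only [hK]
    rw [this, abs_gauss_integral hb]
  -- integrability facts
  have hiabs : Integrable (fun t : ℝ => |t| * Real.exp (-b * t ^ 2)) := by
    have h := (integrable_rpow_mul_exp_neg_mul_sq hb (s := 1) (by norm_num)).abs
    have he : (fun t : ℝ => |t ^ (1:ℝ) * Real.exp (-b * t ^ 2)|)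
        = fun t : ℝ => |t| * Real.exp (-b * t ^ 2) := by
      funext t
      rw [Real.rpow_one, abs_mul, abs_of_pos (Real.exp_pos _)]
    rwa [he] at h
  have hiK : Integrable K := by
    have := (integrable_exp_neg_mul_sq hb).comp_sub_right x
    simpa [hK] using this
  have hiM : Integrable (fun u : ℝ => |u - x| * K u) := by
    have := hiabs.comp_sub_right x
    simpa [hK] using this
  have hKpos : ∀ u, 0 < K u := fun u => Real.exp_pos _
  -- Lipschitz bound on f
  have hlip : ∀ u : ℝ, |f u - f x| ≤ |u - x| := by
    intro u
    have h := abs_max_sub_max_le_max (γ * u) u (γ * x) x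
    refine h.trans (max_le ?_ le_rfl)
    rw [show γ * u - γ * x = γ * (u - x) by ring, abs_mul, abs_of_pos hγ0]
    nlinarith [abs_nonneg (u - x)]
  -- integrability of f * K
  have hmeas : AEStronglyMeasurable (fun u : ℝ => (f u - f x) * K u) volume := by
    apply Continuous.aestronglyMeasurable
    exact ((continuous_const.mul continuous_id).max continuous_id |>.sub continuous_const).mul
      (by continuity)
  have hiFK : Integrable (fun u : ℝ => (f u - f x) * K u) := by
    refine hiM.mono' hmeas ?_
    filter_upwards with u
    rw [norm_mul, Real.norm_eq_abs, Real.norm_eq_abs, abs_of_pos (hKpos u)]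
    exact mul_le_mul_of_nonneg_right (hlip u) (hKpos u).le
  have hifK : Integrable (fun u : ℝ => f u * K u) := by
    have : (fun u : ℝ => f u * K u) = (fun u => (f u - f x) * K u + f x * K u) := by
      funext u; ring
    rw [this]
    exact hiFK.add (hiK.const_mul _)
  -- decomposition
  have hdecomp : slrelu γ β x - f x =
      -((1 - γ) ^ 2 / (2 * Real.pi * β)) + (β / (1 - γ)) * ∫ u, (f u - f x) * K u := by
    have h1 : ∫ u, (f u - f x) * K u = (∫ u, f u * K u) - f x * ((1 - γ) / β) := by
      rw [← hmass, ← integral_const_mul, ← integral_sub hifK (hiK.const_mul _)]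
      congr 1; funext u; ring
    rw [h1, slrelu]
    simp only [hexp]
    have : (β / (1 - γ)) * (f x * ((1 - γ) / β)) = f x := by field_simp
    rw [mul_sub, this]
    ring
  -- bound the integral
  have hint : |∫ u, (f u - f x) * K u| ≤ 1 / b := by
    rw [← hmom]
    have hn := norm_integral_le_integral_norm (μ := volume) (fun u => (f u - f x) * K u)
    simp only [Real.norm_eq_abs] at hn
    refine hn.trans ?_
    refine integral_mono hiFK.abs hiM ?_
    intro u
    show |(f u - f x) * K u| ≤ |u - x| * K u
    rw [abs_mul, abs_of_pos (hKpos u)]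
    exact mul_le_mul_of_nonneg_right (hlip u) (hKpos u).le
  have hfinal : (β / (1 - γ)) * (1 / b) = (1 - γ) / (Real.pi * β) := by
    rw [hbdef]; field_simp
  calc |slrelu γ β x - max (γ * x) x|
      = |-((1 - γ) ^ 2 / (2 * Real.pi * β)) + (β / (1 - γ)) * ∫ u, (f u - f x) * K u| := by
        rw [← hdecomp]
    _ ≤ (1 - γ) ^ 2 / (2 * Real.pi * β) + |(β / (1 - γ)) * ∫ u, (f u - f x) * K u| := by
        refine (abs_add_le _ _).trans ?_
        rw [abs_neg, abs_of_nonneg (by positivity)]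
    _ ≤ (1 - γ) ^ 2 / (2 * Real.pi * β) + (1 - γ) / (Real.pi * β) := by
        gcongr _ + ?_
        rw [abs_mul, abs_of_nonneg (by positivity : (0:ℝ) ≤ β / (1 - γ)), ← hfinal]
        exact mul_le_mul_of_nonneg_left hint (by positivity)


/-- uniform approximation of the leaky ReLU by the smoothed activation. -/
theorem stmt8 (γ : ℝ) (hγ : γ ∈ Set.Ioo (0 : ℝ) 1) :
    (∀ β : ℝ, 0 < β → ∀ x : ℝ,
        |slrelu γ β x - max (γ * x) x| ≤
          (1 - γ) ^ 2 / (2 * Real.pi * β) + (1 - γ) / (Real.pi * β)) ∧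
    Tendsto (fun β : ℝ => ⨆ x : ℝ, |slrelu γ β x - max (γ * x) x|) atTop (nhds 0) := by
  refine ⟨fun β hβ x => slrelu_bound hγ hβ x, ?_⟩
  set B : ℝ → ℝ := fun β => (1 - γ) ^ 2 / (2 * Real.pi * β) + (1 - γ) / (Real.pi * β) with hB
  have hBtend : Tendsto B atTop (nhds 0) := by
    have h1 : Tendsto (fun β : ℝ => (1 - γ) ^ 2 / (2 * Real.pi * β)) atTop (nhds 0) :=
      Tendsto.div_atTop tendsto_const_nhds
        (Tendsto.const_mul_atTop (by positivity) tendsto_id)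
    have h2 : Tendsto (fun β : ℝ => (1 - γ) / (Real.pi * β)) atTop (nhds 0) :=
      Tendsto.div_atTop tendsto_const_nhds
        (Tendsto.const_mul_atTop Real.pi_pos tendsto_id)
    simpa using h1.add h2
  have hE : ∀ᶠ β : ℝ in atTop, (⨆ x : ℝ, |slrelu γ β x - max (γ * x) x|) ≤ B β := by
    filter_upwards [eventually_gt_atTop (0:ℝ)] with β hβ
    exact ciSup_le fun x => slrelu_bound hγ hβ x
  have hE0 : ∀ᶠ β : ℝ in atTop, 0 ≤ ⨆ x : ℝ, |slrelu γ β x - max (γ * x) x| := by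
    filter_upwards [eventually_gt_atTop (0:ℝ)] with β hβ
    have hbdd : BddAbove (Set.range fun x : ℝ => |slrelu γ β x - max (γ * x) x|) :=
      ⟨B β, by rintro _ ⟨x, rfl⟩; exact slrelu_bound hγ hβ x⟩
    exact le_trans (abs_nonneg _) (le_ciSup hbdd 0)
  exact squeeze_zero' hE0 hE hBtend
end

section
/- Let Ψ be the CDF of the standard normal distribution. For any γ ∈ (0,1) and β > 0, the function σ(x) = −(1−γ)²/(2πβ) + ((1−γ)²/(2πβ)) exp(−πβ²x²/(1−γ)²) + x Ψ(β√(2π)x/(1−γ)) + γx Ψ(−β√(2π)x/(1−γ)) equals the Gaussian-smoothed leaky ReLU, i.e., −(1−γ)²/(2πβ) + (β/(1−γ)) ∫_{−∞}^{∞} max(γu, u) e^{−πβ²(x−u)²/(1−γ)²} du. -/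
open MeasureTheory Filter
open scoped Real

section Helpers

open Set

lemma integrable_id_mul_gauss {a : ℝ} (ha : 0 < a) :
    Integrable (fun t : ℝ => t * Real.exp (-a * t ^ 2)) := by
  have := integrable_rpow_mul_exp_neg_mul_sq ha (s := 1) (by norm_num)
  simpa [Real.rpow_one] using this

lemma hasDerivAt_gaussAnti {a : ℝ} (ha : 0 < a) (t : ℝ) :
    HasDerivAt (fun t : ℝ => -(1 / (2 * a)) * Real.exp (-a * t ^ 2))
      (t * Real.exp (-a * t ^ 2)) t := by
  have h1 : HasDerivAt (fun t : ℝ => -a * t ^ 2) (-a * (2 * t)) t := by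
    simpa using (hasDerivAt_pow 2 t).const_mul (-a)
  have h2 := h1.exp.const_mul (-(1 / (2 * a)))
  refine h2.congr_deriv ?_
  field_simp

lemma tendsto_gaussAnti {a : ℝ} (ha : 0 < a) {l : Filter ℝ}
    (hl : Tendsto (fun t : ℝ => t ^ 2) l atTop) :
    Tendsto (fun t : ℝ => -(1 / (2 * a)) * Real.exp (-a * t ^ 2)) l (nhds 0) := by
  have h1 : Tendsto (fun t : ℝ => -a * t ^ 2) l atBot := by
    have := tendsto_neg_atTop_atBot.comp (hl.const_mul_atTop ha)
    simpa [Function.comp_def, neg_mul] using this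
  have h2 := Real.tendsto_exp_atBot.comp h1
  simpa using h2.const_mul (-(1 / (2 * a)))

lemma sq_tendsto_atBot : Tendsto (fun t : ℝ => t ^ 2) atBot atTop := by
  have := (tendsto_pow_atTop (n := 2) two_ne_zero).comp
    (tendsto_neg_atBot_atTop (G := ℝ))
  simpa [Function.comp_def, neg_sq] using this

lemma integral_Iic_id_gauss {a : ℝ} (ha : 0 < a) (w : ℝ) :
    ∫ t in Iic w, t * Real.exp (-a * t ^ 2)
      = -(1 / (2 * a)) * Real.exp (-a * w ^ 2) := by
  have h := integral_Iic_of_hasDerivAt_of_tendsto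
    (f := fun t : ℝ => -(1 / (2 * a)) * Real.exp (-a * t ^ 2))
    (f' := fun t : ℝ => t * Real.exp (-a * t ^ 2))
    (hasDerivAt_gaussAnti ha w).continuousAt.continuousWithinAt
    (fun t _ => hasDerivAt_gaussAnti ha t)
    (integrable_id_mul_gauss ha).integrableOn
    (tendsto_gaussAnti ha sq_tendsto_atBot)
  simpa using h

lemma integral_Ioi_id_gauss {a : ℝ} (ha : 0 < a) (w : ℝ) :
    ∫ t in Ioi w, t * Real.exp (-a * t ^ 2)
      = (1 / (2 * a)) * Real.exp (-a * w ^ 2) := by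
  have h := integral_Ioi_of_hasDerivAt_of_tendsto
    (f := fun t : ℝ => -(1 / (2 * a)) * Real.exp (-a * t ^ 2))
    (f' := fun t : ℝ => t * Real.exp (-a * t ^ 2))
    (hasDerivAt_gaussAnti ha w).continuousAt.continuousWithinAt
    (fun t _ => hasDerivAt_gaussAnti ha t)
    (integrable_id_mul_gauss ha).integrableOn
    (tendsto_gaussAnti ha (tendsto_pow_atTop two_ne_zero))
  rw [h]; ring

lemma integral_Iic_gauss {a : ℝ} (ha : 0 < a) (w : ℝ) :
    ∫ t in Iic w, Real.exp (-a * t ^ 2)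
      = (Real.sqrt (2 * Real.pi) / Real.sqrt (2 * a))
          * stdNormalCDF (Real.sqrt (2 * a) * w) := by
  set c : ℝ := Real.sqrt (2 * a) with hc_def
  have hc : 0 < c := Real.sqrt_pos.mpr (by linarith)
  have hc2 : c ^ 2 = 2 * a := Real.sq_sqrt (by linarith)
  have A : MeasurableEmbedding (fun s : ℝ => c * s) :=
    (Homeomorph.mulLeft₀ c hc.ne').isClosedEmbedding.measurableEmbedding
  have key := A.setIntegral_map (μ := volume)
    (fun t => Real.exp (-t ^ 2 / 2) / Real.sqrt (2 * Real.pi)) (Iic (c * w))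
  rw [Real.map_volume_mul_left hc.ne'] at key
  rw [Measure.restrict_smul, integral_smul_measure] at key
  rw [preimage_const_mul_Iic₀ _ hc, mul_div_cancel_left₀ _ hc.ne'] at key
  have hsimp : ∀ s : ℝ, Real.exp (-(c * s) ^ 2 / 2) / Real.sqrt (2 * Real.pi)
      = Real.exp (-a * s ^ 2) / Real.sqrt (2 * Real.pi) := by
    intro s
    congr 1
    congr 1
    rw [mul_pow, hc2]; ring
  simp only [hsimp] at key
  have hnorm : ENNReal.toReal (ENNReal.ofReal |c⁻¹|) = c⁻¹ := by
    rw [ENNReal.toReal_ofReal (abs_nonneg _), abs_of_pos (by positivity)]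
  rw [hnorm] at key
  have key3 : (∫ t in Iic (c * w), Real.exp (-t ^ 2 / 2) / Real.sqrt (2 * Real.pi))
      = c * ((∫ s in Iic w, Real.exp (-a * s ^ 2)) / Real.sqrt (2 * Real.pi)) := by
    rw [← integral_div, ← key, smul_eq_mul, ← mul_assoc, mul_inv_cancel₀ hc.ne', one_mul]
  have hsq : (0:ℝ) < Real.sqrt (2 * Real.pi) := Real.sqrt_pos.mpr (by positivity)
  rw [stdNormalCDF, key3]
  field_simp

lemma integral_Ioi_gauss {a : ℝ} (ha : 0 < a) (w : ℝ) :
    ∫ t in Ioi w, Real.exp (-a * t ^ 2)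
      = (Real.sqrt (2 * Real.pi) / Real.sqrt (2 * a))
          * stdNormalCDF (-(Real.sqrt (2 * a) * w)) := by
  have h := integral_comp_neg_Ioi w (fun t : ℝ => Real.exp (-a * t ^ 2))
  simp only [neg_sq] at h
  rw [h, integral_Iic_gauss ha, mul_neg]

end Helpers

/-- closed form of the Gaussian-smoothed leaky ReLU in terms of the normal CDF. -/
theorem stmt14 (γ β : ℝ) (hγ : γ ∈ Set.Ioo (0 : ℝ) 1) (hβ : 0 < β) (x : ℝ) :
    -(1 - γ) ^ 2 / (2 * Real.pi * β) +
        ((1 - γ) ^ 2 / (2 * Real.pi * β)) * Real.exp (-(Real.pi * β ^ 2 * x ^ 2) / (1 - γ) ^ 2) +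
        x * stdNormalCDF (β * Real.sqrt (2 * Real.pi) * x / (1 - γ)) +
        γ * x * stdNormalCDF (-(β * Real.sqrt (2 * Real.pi) * x / (1 - γ)))
      = slrelu γ β x := by
  obtain ⟨hγ0, hγ1⟩ := hγ
  have h1γ : 0 < 1 - γ := by linarith
  have hπ : (0:ℝ) < Real.pi := Real.pi_pos
  set a : ℝ := Real.pi * β ^ 2 / (1 - γ) ^ 2 with ha_def
  have ha : 0 < a := by positivity
  have hc : Real.sqrt (2 * a) = Real.sqrt (2 * Real.pi) * β / (1 - γ) := by
    rw [ha_def, show 2 * (Real.pi * β ^ 2 / (1 - γ) ^ 2)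
        = 2 * Real.pi * (β / (1 - γ)) ^ 2 by field_simp,
      Real.sqrt_mul (by positivity), Real.sqrt_sq (by positivity)]
    ring
  have hI : (∫ u : ℝ, max (γ * u) u *
        Real.exp (-(Real.pi * β ^ 2 * (x - u) ^ 2) / (1 - γ) ^ 2))
      = ∫ t : ℝ, max (γ * (t + x)) (t + x) * Real.exp (-a * t ^ 2) := by
    rw [← integral_add_right_eq_self
      (fun u : ℝ => max (γ * u) u *
        Real.exp (-(Real.pi * β ^ 2 * (x - u) ^ 2) / (1 - γ) ^ 2)) x]
    congr 1
    ext t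
    have harg : -(Real.pi * β ^ 2 * (x - (t + x)) ^ 2) / (1 - γ) ^ 2 = -a * t ^ 2 := by
      rw [ha_def]; ring
    rw [harg]
  have eqIic : Set.EqOn
      (fun t : ℝ => γ * (t * Real.exp (-a * t ^ 2)) + (γ * x) * Real.exp (-a * t ^ 2))
      (fun t : ℝ => max (γ * (t + x)) (t + x) * Real.exp (-a * t ^ 2)) (Set.Iic (-x)) := by
    intro t ht
    simp only
    have h0 : t + x ≤ 0 := by
      have : t ≤ -x := ht
      linarith
    rw [max_eq_left (by nlinarith)]
    ring
  have eqIoi : Set.EqOn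
      (fun t : ℝ => t * Real.exp (-a * t ^ 2) + x * Real.exp (-a * t ^ 2))
      (fun t : ℝ => max (γ * (t + x)) (t + x) * Real.exp (-a * t ^ 2)) (Set.Ioi (-x)) := by
    intro t ht
    simp only
    have h0 : 0 ≤ t + x := by
      have : -x < t := ht
      linarith
    rw [max_eq_right (by nlinarith)]
    ring
  have intgA := (integrable_id_mul_gauss ha).const_mul γ
  have intgB := (integrable_exp_neg_mul_sq ha).const_mul (γ * x)
  have intgC := integrable_id_mul_gauss ha
  have intgD := (integrable_exp_neg_mul_sq ha).const_mul x
  have hIic : IntegrableOn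
      (fun t : ℝ => max (γ * (t + x)) (t + x) * Real.exp (-a * t ^ 2)) (Set.Iic (-x)) :=
    ((intgA.add intgB).integrableOn).congr_fun eqIic measurableSet_Iic
  have hIoi : IntegrableOn
      (fun t : ℝ => max (γ * (t + x)) (t + x) * Real.exp (-a * t ^ 2)) (Set.Ioi (-x)) :=
    ((intgC.add intgD).integrableOn).congr_fun eqIoi measurableSet_Ioi
  have split := intervalIntegral.integral_Iic_add_Ioi hIic hIoi
  have e1 : (∫ t in Set.Iic (-x), max (γ * (t + x)) (t + x) * Real.exp (-a * t ^ 2))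
      = γ * (-(1 / (2 * a)) * Real.exp (-a * x ^ 2))
        + (γ * x) * ((Real.sqrt (2 * Real.pi) / Real.sqrt (2 * a))
            * stdNormalCDF (Real.sqrt (2 * a) * (-x))) := by
    rw [← setIntegral_congr_fun measurableSet_Iic eqIic,
      integral_add intgA.integrableOn intgB.integrableOn,
      integral_const_mul, integral_const_mul,
      integral_Iic_id_gauss ha, integral_Iic_gauss ha, neg_sq]
  have e2 : (∫ t in Set.Ioi (-x), max (γ * (t + x)) (t + x) * Real.exp (-a * t ^ 2))
      = (1 / (2 * a)) * Real.exp (-a * x ^ 2)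
        + x * ((Real.sqrt (2 * Real.pi) / Real.sqrt (2 * a))
            * stdNormalCDF (-(Real.sqrt (2 * a) * (-x)))) := by
    rw [← setIntegral_congr_fun measurableSet_Ioi eqIoi,
      integral_add intgC.integrableOn intgD.integrableOn,
      integral_const_mul, integral_Ioi_id_gauss ha, integral_Ioi_gauss ha, neg_sq]
  have hz1 : Real.sqrt (2 * a) * (-x) = -(β * Real.sqrt (2 * Real.pi) * x / (1 - γ)) := by
    rw [hc]; ring
  have hz2 : -(Real.sqrt (2 * a) * (-x)) = β * Real.sqrt (2 * Real.pi) * x / (1 - γ) := by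
    rw [hc]; ring
  have hE : -(Real.pi * β ^ 2 * x ^ 2) / (1 - γ) ^ 2 = -a * x ^ 2 := by
    rw [ha_def]; ring
  have hsq : (0:ℝ) < Real.sqrt (2 * Real.pi) := Real.sqrt_pos.mpr (by positivity)
  rw [slrelu, hI, ← split, e1, e2, hz2, hz1, hE, hc, ha_def]
  field_simp
  ring
end
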